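/- For points p, q in ℝ^d and a grid of cell width R with shift s uniform on [0,R)^d, the probability that p and q lie in different grid cells is at most ‖p - q‖₁ / R. -/

import Mathlib

open MeasureTheory

lemma oneD_aux (R : ℝ) (hR : 0 < R) (a b : ℝ) (hab : a ≤ b) :
    volume {t : ℝ | t ∈ Set.Ico 0 R ∧ ⌊(a - t)/R⌋ ≠ ⌊(b - t)/R⌋}
      ≤ ENNReal.ofReal (b - a) := by
  by_cases hδ : b - a < R
  · set m : ℤ := ⌊a / R⌋ with hm
    have hmle : (m : ℝ) * R ≤ a := by
      have := Int.floor_le (a / R)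
      calc (m:ℝ) * R ≤ (a/R) * R := by nlinarith
        _ = a := div_mul_cancel₀ a hR.ne'
    have hmlt : a < ((m : ℝ) + 1) * R := by
      have := Int.lt_floor_add_one (a / R)
      calc a = (a/R)*R := (div_mul_cancel₀ a hR.ne').symm
        _ < ((m:ℝ)+1) * R := by nlinarith
    have key : {t : ℝ | t ∈ Set.Ico 0 R ∧ ⌊(a - t)/R⌋ ≠ ⌊(b - t)/R⌋}
        ⊆ Set.Icc (a - m*R) (min (b - m*R) R) ∪ Set.Icc 0 (b - ((m:ℝ)+1)*R) := by
      rintro t ⟨⟨ht0, htR⟩, hne⟩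
      have hmono : ⌊(a - t)/R⌋ < ⌊(b - t)/R⌋ := by
        refine lt_of_le_of_ne (Int.floor_le_floor ?_) hne
        gcongr
      set k : ℤ := ⌊(b - t)/R⌋ with hk
      have h1 : (k:ℝ) * R ≤ b - t := by
        have := Int.floor_le ((b - t) / R)
        calc (k:ℝ) * R ≤ ((b-t)/R) * R := by nlinarith
          _ = b - t := div_mul_cancel₀ _ hR.ne'
      have h2 : a - t < (k:ℝ) * R := by
        have hfl : ((⌊(a - t)/R⌋ : ℝ) + 1) ≤ (k:ℝ) := by exact_mod_cast hmono
        have := Int.lt_floor_add_one ((a - t) / R)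
        have : (a - t)/R < (k:ℝ) := by linarith
        calc a - t = ((a-t)/R) * R := (div_mul_cancel₀ _ hR.ne').symm
          _ < (k:ℝ) * R := by nlinarith
      have hkm : m ≤ k := by
        have h : (m:ℝ) < (k:ℝ) + 1 := by nlinarith
        have h' : (m:ℝ) < ((k + 1 : ℤ) : ℝ) := by push_cast; linarith
        have : m < k + 1 := by exact_mod_cast h'
        omega
      have hkm' : k ≤ m + 1 := by
        have h : (k:ℝ) < (m:ℝ) + 2 := by nlinarith
        have h' : (k:ℝ) < ((m + 2 : ℤ) : ℝ) := by push_cast; linarith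
        have : k < m + 2 := by exact_mod_cast h'
        omega
      have hk2 : k = m ∨ k = m + 1 := by omega
      rcases hk2 with hke | hke <;> rw [hke] at h1 h2
      · left
        exact ⟨by linarith, le_min (by linarith) (by linarith)⟩
      · right
        push_cast at h1 h2
        exact ⟨ht0, by linarith⟩
    calc volume {t : ℝ | t ∈ Set.Ico 0 R ∧ ⌊(a - t)/R⌋ ≠ ⌊(b - t)/R⌋}
        ≤ volume (Set.Icc (a - m*R) (min (b - m*R) R) ∪ Set.Icc 0 (b - ((m:ℝ)+1)*R)) :=
          measure_mono key
      _ ≤ volume (Set.Icc (a - ↑m*R) (min (b - ↑m*R) R)) + volume (Set.Icc 0 (b - ((m:ℝ)+1)*R)) :=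
          measure_union_le _ _
      _ = ENNReal.ofReal (min (b - ↑m*R) R - (a - ↑m*R)) + ENNReal.ofReal (b - ((m:ℝ)+1)*R - 0) := by
          rw [Real.volume_Icc, Real.volume_Icc]
      _ ≤ ENNReal.ofReal (b - a) := by
          by_cases hb : b ≤ ((m:ℝ)+1)*R
          · have h2 : ENNReal.ofReal (b - ((m:ℝ)+1)*R - 0) = 0 :=
              ENNReal.ofReal_eq_zero.mpr (by linarith)
            rw [h2, add_zero]
            refine ENNReal.ofReal_le_ofReal ?_
            have := min_le_left (b - (m:ℝ)*R) R
            linarith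
          · have hmin : min (b - (m:ℝ)*R) R = R := min_eq_right (by push_neg at hb; linarith)
            rw [hmin, ← ENNReal.ofReal_add (by linarith) (by push_neg at hb; linarith)]
            refine ENNReal.ofReal_le_ofReal (by linarith)
  · push_neg at hδ
    calc volume {t : ℝ | t ∈ Set.Ico 0 R ∧ ⌊(a - t)/R⌋ ≠ ⌊(b - t)/R⌋}
        ≤ volume (Set.Ico (0:ℝ) R) := measure_mono (fun t ht => ht.1)
      _ = ENNReal.ofReal (R - 0) := Real.volume_Ico
      _ ≤ ENNReal.ofReal (b - a) := ENNReal.ofReal_le_ofReal (by linarith)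

lemma oneD (R : ℝ) (hR : 0 < R) (a b : ℝ) :
    volume {t : ℝ | t ∈ Set.Ico 0 R ∧ ⌊(a - t)/R⌋ ≠ ⌊(b - t)/R⌋}
      ≤ ENNReal.ofReal |a - b| := by
  rcases le_total a b with hab | hab
  · rw [abs_sub_comm, abs_of_nonneg (by linarith)]
    exact oneD_aux R hR a b hab
  · rw [abs_of_nonneg (by linarith)]
    have : {t : ℝ | t ∈ Set.Ico 0 R ∧ ⌊(a - t)/R⌋ ≠ ⌊(b - t)/R⌋}
        = {t : ℝ | t ∈ Set.Ico 0 R ∧ ⌊(b - t)/R⌋ ≠ ⌊(a - t)/R⌋} := by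
      ext t; simp [ne_comm]
    rw [this]
    exact oneD_aux R hR b a hab

/-- For points `p, q ∈ ℝ^d` and an axis-aligned grid of cell width `R > 0` with shift `s`
uniform on `[0,R)^d` (a point `x` lies in the cell `(⌊(x j - s j)/R⌋)_j`), the probability
that `p` and `q` lie in different grid cells is at most `‖p - q‖₁ / R`. -/
theorem grid_separation_prob_l1 (d : ℕ) (hd : 0 < d) (R : ℝ) (hRpos : 0 < R)
    (p q : EuclideanSpace ℝ (Fin d)) :
    volume {s : EuclideanSpace ℝ (Fin d) |
        (∀ j, s j ∈ Set.Ico (0 : ℝ) R) ∧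
        ∃ j, ⌊(p j - s j) / R⌋ ≠ ⌊(q j - s j) / R⌋}
      ≤ ENNReal.ofReal ((∑ j, |p j - q j|) / R) *
        volume {s : EuclideanSpace ℝ (Fin d) | ∀ j, s j ∈ Set.Ico (0 : ℝ) R} := by
  classical
  set Sbad : Set (Fin d → ℝ) :=
    {x | (∀ j, x j ∈ Set.Ico (0 : ℝ) R) ∧ ∃ j, ⌊(p j - x j) / R⌋ ≠ ⌊(q j - x j) / R⌋} with hSbad
  set Sbox : Set (Fin d → ℝ) := {x | ∀ j, x j ∈ Set.Ico (0 : ℝ) R} with hSbox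
  have hboxpi : Sbox = Set.univ.pi (fun _ => Set.Ico (0:ℝ) R) := by
    ext x; simp [hSbox, Set.mem_pi]
  have hboxmeas : MeasurableSet Sbox := by
    rw [hboxpi]; exact MeasurableSet.univ_pi (fun _ => measurableSet_Ico)
  have hbadmeas : MeasurableSet Sbad := by
    have : Sbad = Sbox ∩ ⋃ j, {x : Fin d → ℝ | ⌊(p j - x j) / R⌋ ≠ ⌊(q j - x j) / R⌋} := by
      ext x; simp [hSbad, hSbox]
    rw [this]
    refine hboxmeas.inter (MeasurableSet.iUnion fun j => ?_)
    have hf : Measurable fun x : Fin d → ℝ => ⌊(p j - x j) / R⌋ :=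
      (Measurable.div_const (f := fun x : Fin d → ℝ => p j - x j) (measurable_const.sub (measurable_pi_apply j)) R).floor
    have hg : Measurable fun x : Fin d → ℝ => ⌊(q j - x j) / R⌋ :=
      (Measurable.div_const (f := fun x : Fin d → ℝ => q j - x j) (measurable_const.sub (measurable_pi_apply j)) R).floor
    exact (measurableSet_eq_fun hf hg).compl
  -- transfer to pi space
  have e := EuclideanSpace.volume_preserving_symm_measurableEquiv_toLp (ι := Fin d)
  have hvol1 : volume {s : EuclideanSpace ℝ (Fin d) |
        (∀ j, s j ∈ Set.Ico (0 : ℝ) R) ∧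
        ∃ j, ⌊(p j - s j) / R⌋ ≠ ⌊(q j - s j) / R⌋} = volume Sbad := by
    rw [← e.measure_preimage hbadmeas.nullMeasurableSet]
    rfl
  have hvol2 : volume {s : EuclideanSpace ℝ (Fin d) | ∀ j, s j ∈ Set.Ico (0 : ℝ) R}
      = volume Sbox := by
    rw [← e.measure_preimage hboxmeas.nullMeasurableSet]
    rfl
  rw [hvol1, hvol2, hboxpi, volume_pi_pi]
  simp only [Real.volume_Ico, sub_zero, Finset.prod_const, Finset.card_univ, Fintype.card_fin]
  -- bound volume Sbad
  set A : Fin d → Fin d → Set ℝ := fun j i =>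
    if i = j then {t : ℝ | t ∈ Set.Ico 0 R ∧ ⌊(p j - t)/R⌋ ≠ ⌊(q j - t)/R⌋}
    else Set.Ico (0:ℝ) R with hA
  have hsub : Sbad ⊆ ⋃ j, Set.univ.pi (A j) := by
    rintro x ⟨hbox, j, hj⟩
    refine Set.mem_iUnion.mpr ⟨j, fun i _ => ?_⟩
    by_cases hij : i = j
    · subst hij; simp only [hA, if_pos rfl]; exact ⟨hbox i, hj⟩
    · simp only [hA, if_neg hij]; exact hbox i
  have hAj : ∀ j, volume (Set.univ.pi (A j))
      ≤ ENNReal.ofReal |p j - q j| * ENNReal.ofReal R ^ (d - 1) := by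
    intro j
    rw [volume_pi_pi]
    rw [← Finset.mul_prod_erase Finset.univ _ (Finset.mem_univ j)]
    have h1 : volume (A j j) ≤ ENNReal.ofReal |p j - q j| := by
      simp only [hA, if_pos rfl]; exact oneD R hRpos (p j) (q j)
    have h2 : ∏ i ∈ Finset.univ.erase j, volume (A j i) = ENNReal.ofReal R ^ (d - 1) := by
      rw [Finset.prod_congr rfl (fun i hi => ?_)]
      · rw [Finset.prod_const, Finset.card_erase_of_mem (Finset.mem_univ j),
          Finset.card_univ, Fintype.card_fin]
      · rw [hA]; simp only [if_neg (Finset.ne_of_mem_erase hi)]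
        rw [Real.volume_Ico, sub_zero]
    rw [h2]
    exact mul_le_mul_left h1 _
  have hsum : volume Sbad ≤ ∑ j, ENNReal.ofReal |p j - q j| * ENNReal.ofReal R ^ (d - 1) :=
    (measure_mono hsub).trans ((measure_iUnion_fintype_le _ _).trans (Finset.sum_le_sum fun j _ => hAj j))
  refine hsum.trans ?_
  rw [← Finset.sum_mul, ← ENNReal.ofReal_sum_of_nonneg (fun i _ => abs_nonneg _)]
  have hr0 : ENNReal.ofReal R ≠ 0 := by
    simp [ENNReal.ofReal_eq_zero]; linarith
  have hrt : ENNReal.ofReal R ≠ ⊤ := ENNReal.ofReal_ne_top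
  rw [ENNReal.ofReal_div_of_pos hRpos]
  have hpow : ENNReal.ofReal R ^ d = ENNReal.ofReal R * ENNReal.ofReal R ^ (d - 1) := by
    conv_lhs => rw [← Nat.succ_pred_eq_of_pos hd]
    rw [pow_succ']; rfl
  rw [hpow, ← mul_assoc, ENNReal.div_mul_cancel hr0 hrt]
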